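/- Let d ≥ 0 and let K have characteristic zero or odd prime characteristic greater than d. Let A ∈ Mat_{d+1}(K) be the tridiagonal matrix with zero diagonal, A_{i-1,i} = d - i + 1 and A_{i,i-1} = i, and let A* = diag(d, d-2, d-4, ..., -d). Then A, A* is a Leonard pair in Mat_{d+1}(K), A has constant row sum d, and A is in TD-D canonical form. -/
import Mathlib


open Polynomial Matrix Finset

variable {K : Type*} [Field K]

/-- The primitive idempotent of `A` associated with eigenvalue `θ i`:
`E i = ∏_{j ≠ i} (A - θ j • 1) / (θ i - θ j)`. -/
noncomputable def primIdem {d : ℕ} (A : Matrix (Fin (d + 1)) (Fin (d + 1)) K)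
    (θ : Fin (d + 1) → K) (i : Fin (d + 1)) : Matrix (Fin (d + 1)) (Fin (d + 1)) K :=
  Polynomial.aeval A
    (∏ j ∈ Finset.univ.erase i,
      (Polynomial.C (θ i - θ j)⁻¹ * (Polynomial.X - Polynomial.C (θ j))))

/-- `A` is multiplicity-free with (distinct) eigenvalues `θ 0, …, θ d`. -/
def MultFreeWith {d : ℕ} (A : Matrix (Fin (d + 1)) (Fin (d + 1)) K)
    (θ : Fin (d + 1) → K) : Prop :=
  Function.Injective θ ∧ A.charpoly = ∏ i, (Polynomial.X - Polynomial.C (θ i))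

/-- `θ` is an eigenvalue sequence for the (ordered) pair `A, B`: the corresponding
ordering of the primitive idempotents of `A` is an idempotent sequence for `A, B`. -/
def IsEigenvalueSeq {d : ℕ} (A B : Matrix (Fin (d + 1)) (Fin (d + 1)) K)
    (θ : Fin (d + 1) → K) : Prop :=
  MultFreeWith A θ ∧
    ∀ i j : Fin (d + 1),
      (1 < |((i : ℕ) : ℤ) - ((j : ℕ) : ℤ)| → primIdem A θ i * B * primIdem A θ j = 0) ∧
      (|((i : ℕ) : ℤ) - ((j : ℕ) : ℤ)| = 1 → primIdem A θ i * B * primIdem A θ j ≠ 0)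

/-- `A, B` is a Leonard pair in `Mat_{d+1}(K)`. -/
def IsLeonardPair {d : ℕ} (A B : Matrix (Fin (d + 1)) (Fin (d + 1)) K) : Prop :=
  (∃ θ, IsEigenvalueSeq A B θ) ∧ (∃ θs, IsEigenvalueSeq B A θs)

/-- Every nonzero entry lies on the diagonal or the subdiagonal. -/
def LowerBidiagonal {K : Type*} [Field K] {d : ℕ}
    (A : Matrix (Fin (d + 1)) (Fin (d + 1)) K) : Prop :=
  ∀ i j : Fin (d + 1), (i : ℕ) ≠ (j : ℕ) → (i : ℕ) ≠ (j : ℕ) + 1 → A i j = 0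

/-- Every nonzero entry lies on the diagonal or the superdiagonal. -/
def UpperBidiagonal {K : Type*} [Field K] {d : ℕ}
    (A : Matrix (Fin (d + 1)) (Fin (d + 1)) K) : Prop :=
  ∀ i j : Fin (d + 1), (i : ℕ) ≠ (j : ℕ) → (j : ℕ) ≠ (i : ℕ) + 1 → A i j = 0

/-- Every nonzero entry lies on the diagonal, subdiagonal, or superdiagonal. -/
def Tridiagonal {K : Type*} [Field K] {d : ℕ}
    (A : Matrix (Fin (d + 1)) (Fin (d + 1)) K) : Prop :=
  ∀ i j : Fin (d + 1), 1 < |((i : ℕ) : ℤ) - ((j : ℕ) : ℤ)| → A i j = 0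

/-- `LL n p = ∑_{k≤n} (coeff k p) • (1-X)^k (1+X)^{n-k}`. -/
noncomputable def LLaux (n : ℕ) (p : K[X]) : K[X] :=
  ∑ k ∈ Finset.range (n + 1), p.coeff k • ((1 - X) ^ k * (1 + X) ^ (n - k))

lemma LLaux_sub (n : ℕ) (p : K[X]) (hp : p.natDegree ≤ n) :
    LLaux (n + 1) ((1 - X) * p) = 2 * X * LLaux n p := by
  have h1 : LLaux (n + 1) ((1 - X) * p)
      = ∑ k ∈ Finset.range (n + 2),
          (p.coeff k • ((1 - X) ^ k * (1 + X) ^ (n + 1 - k))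
            - ((X * p).coeff k) • ((1 - X) ^ k * (1 + X) ^ (n + 1 - k))) := by
    unfold LLaux
    refine Finset.sum_congr rfl fun k _ => ?_
    rw [sub_mul, one_mul, coeff_sub, sub_smul]
  rw [h1, Finset.sum_sub_distrib]
  have h2 : ∑ k ∈ Finset.range (n + 2), p.coeff k • ((1 - X) ^ k * (1 + X) ^ (n + 1 - k))
      = (1 + X) * LLaux n p := by
    rw [Finset.sum_range_succ]
    have : p.coeff (n + 1) = 0 := coeff_eq_zero_of_natDegree_lt (by omega)
    rw [this, zero_smul, add_zero]
    unfold LLaux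
    rw [Finset.mul_sum]
    refine Finset.sum_congr rfl fun k hk => ?_
    rw [Finset.mem_range] at hk
    have : n + 1 - k = (n - k) + 1 := by omega
    rw [this, mul_smul_comm]
    ring_nf
  have h3 : ∑ k ∈ Finset.range (n + 2), (X * p).coeff k • ((1 - X) ^ k * (1 + X) ^ (n + 1 - k))
      = (1 - X) * LLaux n p := by
    rw [Finset.sum_range_succ']
    simp only [mul_coeff_zero, coeff_X_zero, zero_mul, zero_smul, add_zero, coeff_X_mul]
    unfold LLaux
    rw [Finset.mul_sum]
    refine Finset.sum_congr rfl fun k hk => ?_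
    have : n + 1 - (k + 1) = n - k := by omega
    rw [this, mul_smul_comm, pow_succ]
    ring_nf
  rw [h2, h3]
  ring

lemma LLaux_add (n : ℕ) (p : K[X]) (hp : p.natDegree ≤ n) :
    LLaux (n + 1) ((1 + X) * p) = 2 * LLaux n p := by
  have h1 : LLaux (n + 1) ((1 + X) * p)
      = ∑ k ∈ Finset.range (n + 2),
          (p.coeff k • ((1 - X) ^ k * (1 + X) ^ (n + 1 - k))
            + ((X * p).coeff k) • ((1 - X) ^ k * (1 + X) ^ (n + 1 - k))) := by
    unfold LLaux
    refine Finset.sum_congr rfl fun k _ => ?_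
    rw [add_mul, one_mul, coeff_add, add_smul]
  rw [h1, Finset.sum_add_distrib]
  have h2 : ∑ k ∈ Finset.range (n + 2), p.coeff k • ((1 - X) ^ k * (1 + X) ^ (n + 1 - k))
      = (1 + X) * LLaux n p := by
    rw [Finset.sum_range_succ]
    have : p.coeff (n + 1) = 0 := coeff_eq_zero_of_natDegree_lt (by omega)
    rw [this, zero_smul, add_zero]
    unfold LLaux
    rw [Finset.mul_sum]
    refine Finset.sum_congr rfl fun k hk => ?_
    rw [Finset.mem_range] at hk
    have : n + 1 - k = (n - k) + 1 := by omega
    rw [this, mul_smul_comm]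
    ring_nf
  have h3 : ∑ k ∈ Finset.range (n + 2), (X * p).coeff k • ((1 - X) ^ k * (1 + X) ^ (n + 1 - k))
      = (1 - X) * LLaux n p := by
    rw [Finset.sum_range_succ']
    simp only [mul_coeff_zero, coeff_X_zero, zero_mul, zero_smul, add_zero, coeff_X_mul]
    unfold LLaux
    rw [Finset.mul_sum]
    refine Finset.sum_congr rfl fun k hk => ?_
    have : n + 1 - (k + 1) = n - k := by omega
    rw [this, mul_smul_comm, pow_succ]
    ring_nf
  rw [h2, h3]
  ring

lemma natDegree_f_le (a b : ℕ) : (((1 - X) ^ a * (1 + X) ^ b : K[X])).natDegree ≤ a + b := by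
  refine (natDegree_mul_le).trans ?_
  have h1 : ((1 - X : K[X]) ^ a).natDegree ≤ a := by
    refine (natDegree_pow_le).trans ?_
    have : (1 - X : K[X]).natDegree ≤ 1 := by
      refine (natDegree_sub_le _ _).trans ?_
      simp
    nlinarith
  have h2 : ((1 + X : K[X]) ^ b).natDegree ≤ b := by
    refine (natDegree_pow_le).trans ?_
    have : (1 + X : K[X]).natDegree ≤ 1 := by
      refine (natDegree_add_le _ _).trans ?_
      simp
    nlinarith
  omega

lemma LLaux_main (a b : ℕ) :
    LLaux (a + b) ((1 - X) ^ a * (1 + X) ^ b : K[X]) = (2 ^ (a + b) : K[X]) * X ^ a := by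
  induction a with
  | zero =>
    induction b with
    | zero => simp [LLaux]
    | succ m ih =>
      have : ((1 - X) ^ 0 * (1 + X) ^ (m + 1) : K[X]) = (1 + X) * ((1 - X) ^ 0 * (1 + X) ^ m) := by
        ring
      rw [show (0 + (m+1)) = (0 + m) + 1 by omega, this,
        LLaux_add _ _ (natDegree_f_le 0 m), ih]
      ring
  | succ a ih =>
    have : ((1 - X) ^ (a + 1) * (1 + X) ^ b : K[X]) = (1 - X) * ((1 - X) ^ a * (1 + X) ^ b) := by
      ring
    rw [show ((a+1) + b) = (a + b) + 1 by omega, this,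
      LLaux_sub _ _ (natDegree_f_le a b), ih]
    ring


lemma sum_split {d : ℕ} (A : Matrix (Fin (d+1)) (Fin (d+1)) K)
    (hA : ∀ i j : Fin (d + 1), A i j =
      if (j : ℕ) = (i : ℕ) + 1 then (d : K) - ((i : ℕ) : K)
      else if (i : ℕ) = (j : ℕ) + 1 then ((i : ℕ) : K)
      else 0)
    {V : Type*} [AddCommMonoid V] [Module K V] (i : Fin (d+1)) (g : Fin (d+1) → V) :
    ∑ k, A i k • g k
      = (if h : (i:ℕ) < d then ((d:K) - (i:K)) • g ⟨(i:ℕ)+1, by omega⟩ else 0)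
        + (if h : 0 < (i:ℕ) then ((i:K)) • g ⟨(i:ℕ)-1, by omega⟩ else 0) := by
  have hsplit : ∀ k : Fin (d+1), A i k • g k
      = (if (k:ℕ) = (i:ℕ) + 1 then ((d:K) - (i:K)) • g k else 0)
        + (if (i:ℕ) = (k:ℕ) + 1 then ((i:K)) • g k else 0) := by
    intro k
    rw [hA]
    by_cases h1 : (k:ℕ) = (i:ℕ) + 1
    · have h2 : ¬ ((i:ℕ) = (k:ℕ) + 1) := by omega
      rw [if_pos h1, if_pos h1, if_neg h2, add_zero]
    · by_cases h2 : (i:ℕ) = (k:ℕ) + 1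
      · rw [if_neg h1, if_pos h2, if_neg h1, zero_add, if_pos h2]
      · rw [if_neg h1, if_neg h2, if_neg h1, if_neg h2, add_zero, zero_smul]
  rw [Finset.sum_congr rfl fun k _ => hsplit k, Finset.sum_add_distrib]
  congr 1
  · by_cases h : (i:ℕ) < d
    · rw [dif_pos h]
      have : ∀ k : Fin (d+1), ((k:ℕ) = (i:ℕ) + 1) ↔ (k = ⟨(i:ℕ)+1, by omega⟩) := by
        intro k
        simp only [Fin.ext_iff, Fin.val_mk]
        try omega
      simp only [this]
      rw [Finset.sum_ite_eq' Finset.univ (⟨(i:ℕ)+1, by omega⟩ : Fin (d+1))]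
      simp
    · rw [dif_neg h]
      refine Finset.sum_eq_zero fun k _ => ?_
      rw [if_neg (by omega)]
  · by_cases h : 0 < (i:ℕ)
    · rw [dif_pos h]
      have : ∀ k : Fin (d+1), ((i:ℕ) = (k:ℕ) + 1) ↔ (k = ⟨(i:ℕ)-1, by omega⟩) := by
        intro k
        simp only [Fin.ext_iff, Fin.val_mk]
        try omega
      simp only [this]
      rw [Finset.sum_ite_eq' Finset.univ (⟨(i:ℕ)-1, by omega⟩ : Fin (d+1))]
      simp
    · rw [dif_neg h]
      refine Finset.sum_eq_zero fun k _ => ?_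
      rw [if_neg (by omega)]


lemma coeff_X_mul_deriv (p : K[X]) (n : ℕ) :
    (X * derivative p).coeff n = n * p.coeff n := by
  cases n with
  | zero => simp
  | succ m =>
    rw [coeff_X_mul, coeff_derivative]
    push_cast
    ring

lemma deriv_f (a b : ℕ) :
    derivative ((1 - X) ^ (a+1) * (1 + X) ^ (b+1) : K[X])
      = -((a:K[X])+1) * ((1 - X) ^ a * (1 + X) ^ (b+1))
        + ((b:K[X])+1) * ((1 - X) ^ (a+1) * (1 + X) ^ b) := by
  rw [derivative_mul, derivative_pow, derivative_pow]
  simp only [derivative_sub, derivative_add, derivative_one, derivative_X, zero_sub, zero_add,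
    Nat.add_sub_cancel, map_natCast]
  push_cast
  ring

-- interior three-term recurrence
lemma rec_interior (a b : ℕ) :
    ((b:K)+1) • ((1 - X) ^ (a+2) * (1 + X) ^ b : K[X])
      + ((a:K)+1) • ((1 - X) ^ a * (1 + X) ^ (b+2))
    = ((a:K)+(b:K)+2) • ((1 - X) ^ (a+1) * (1 + X) ^ (b+1))
      - (2:K) • (X * derivative ((1 - X) ^ (a+1) * (1 + X) ^ (b+1))) := by
  rw [deriv_f]
  simp only [smul_eq_C_mul, map_add, _root_.map_one, map_natCast, map_ofNat]
  push_cast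
  ring

lemma rec_left (b : ℕ) :
    ((b:K)+1) • ((1 - X) ^ 1 * (1 + X) ^ b : K[X])
    = ((b:K)+1) • ((1 - X) ^ 0 * (1 + X) ^ (b+1))
      - (2:K) • (X * derivative ((1 - X) ^ 0 * (1 + X) ^ (b+1))) := by
  simp only [pow_zero, pow_one, one_mul, derivative_pow, derivative_add, derivative_one,
    derivative_X, zero_add, Nat.add_sub_cancel, mul_one, smul_eq_C_mul, map_add, _root_.map_one,
    map_natCast, map_ofNat]
  push_cast
  ring

lemma rec_right (a : ℕ) :
    ((a:K)+1) • ((1 - X) ^ a * (1 + X) ^ 1 : K[X])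
    = ((a:K)+1) • ((1 - X) ^ (a+1) * (1 + X) ^ 0)
      - (2:K) • (X * derivative ((1 - X) ^ (a+1) * (1 + X) ^ 0)) := by
  simp only [pow_zero, pow_one, mul_one, derivative_pow, derivative_sub, derivative_one,
    derivative_X, zero_sub, Nat.add_sub_cancel, mul_one, smul_eq_C_mul, map_add, _root_.map_one,
    map_natCast, map_ofNat]
  push_cast
  ring

-- conjugation of aeval
lemma aeval_conj {n : Type*} [Fintype n] [DecidableEq n]
    (P Q M : Matrix n n K) (hPQ : P * Q = 1) (hQP : Q * P = 1) (p : K[X]) :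
    aeval (P * M * Q) p = P * aeval M p * Q := by
  induction p using Polynomial.induction_on' with
  | add p q hp hq => rw [map_add, map_add, hp, hq]; noncomm_ring
  | monomial k c =>
    rw [aeval_monomial, aeval_monomial]
    have hpow : (P * M * Q) ^ k = P * M ^ k * Q := by
      induction k with
      | zero => rw [pow_zero, pow_zero, mul_one, hPQ]
      | succ m ihm =>
        rw [pow_succ, pow_succ, ihm]
        calc P * M ^ m * Q * (P * M * Q) = P * M ^ m * (Q * P) * M * Q := by noncomm_ring
        _ = P * (M ^ m * M) * Q := by rw [hQP]; noncomm_ring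
    have hs : ∀ N : Matrix n n K, (algebraMap K (Matrix n n K)) c * N = c • N :=
      fun N => (Algebra.smul_def c N).symm
    rw [hpow, hs, hs]
    simp only [Matrix.mul_smul, Matrix.smul_mul]

lemma charpoly_conj {n : Type*} [Fintype n] [DecidableEq n]
    (P Q M : Matrix n n K) (hPQ : P * Q = 1) (hQP : Q * P = 1) :
    (P * M * Q).charpoly = M.charpoly := by
  have hmap : ∀ N₁ N₂ : Matrix n n K, (N₁ * N₂).map (C : K →+* K[X]) = N₁.map C * N₂.map C :=
    fun N₁ N₂ => Matrix.map_mul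
  have hsc : ∀ N : Matrix n n K[X], (Matrix.scalar n (X : K[X])) * N = N * Matrix.scalar n X :=
    fun N => (Matrix.scalar_commute (X : K[X]) (fun r => Commute.all _ _) N).eq
  have hc : charmatrix (P * M * Q) = P.map C * charmatrix M * Q.map C := by
    simp only [charmatrix, RingHom.mapMatrix_apply]
    rw [mul_sub, sub_mul]
    congr 1
    · calc (Matrix.scalar n (X : K[X]))
          = Matrix.scalar n (X : K[X]) * (P.map C * Q.map C) := by rw [← hmap, hPQ]; simp
        _ = P.map C * Matrix.scalar n (X:K[X]) * Q.map C := by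
            rw [hsc, mul_assoc, mul_assoc, ← hsc]
    · rw [hmap, hmap]
  rw [Matrix.charpoly, hc, Matrix.det_mul, Matrix.det_mul, Matrix.charpoly]
  have hdet : (P.map (C : K →+* K[X])).det * (Q.map (C : K →+* K[X])).det = 1 := by
    rw [← Matrix.det_mul, ← hmap, hPQ]
    simp
  calc (P.map (C : K →+* K[X])).det * (charmatrix M).det * (Q.map (C : K →+* K[X])).det
      = (charmatrix M).det
        * ((P.map (C : K →+* K[X])).det * (Q.map (C : K →+* K[X])).det) := by ring
  _ = (charmatrix M).det := by rw [hdet, mul_one]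


/-- the Krawtchouk example, a Leonard pair in TD-D canonical form. -/
theorem example_tdd_leonard_pair {d : ℕ}
    (hchar : CharZero K ∨ ∃ p, p.Prime ∧ Odd p ∧ d < p ∧ CharP K p)
    (A Astar : Matrix (Fin (d + 1)) (Fin (d + 1)) K)
    (hA : ∀ i j : Fin (d + 1), A i j =
      if (j : ℕ) = (i : ℕ) + 1 then (d : K) - ((i : ℕ) : K)
      else if (i : ℕ) = (j : ℕ) + 1 then ((i : ℕ) : K)
      else 0)
    (hAs : ∀ i j : Fin (d + 1), Astar i j =
      if (i : ℕ) = (j : ℕ) then (d : K) - 2 * ((i : ℕ) : K) else 0) :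
    IsLeonardPair A Astar ∧
    (∀ i : Fin (d + 1), ∑ j, A i j = (d : K)) ∧
    Tridiagonal A ∧ Astar.IsDiag ∧
    ∃ θ : Fin (d + 1) → K, IsEigenvalueSeq A Astar θ ∧
      (θ 0 = (d : K) ∨ θ (Fin.last d) = (d : K)) := by
  -- eigenvalues
  set θ : Fin (d+1) → K := fun i => (d : K) - 2 * ((i:ℕ) : K) with hθ
  -- characteristic facts
  have hn0 : ∀ n : ℕ, 0 < n → n ≤ d → ((n:K) ≠ 0) := by
    rcases hchar with h | ⟨p, hp, hodd, hdp, hcp⟩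
    · intro n hn _
      exact Nat.cast_ne_zero.mpr (by omega)
    · intro n hn hnd h
      have := (CharP.cast_eq_zero_iff K p n).mp h
      have := Nat.le_of_dvd hn this
      omega
  have h2 : (2:K) ≠ 0 := by
    rcases hchar with h | ⟨p, hp, hodd, hdp, hcp⟩
    · exact two_ne_zero
    · intro h
      have h' : ((2:ℕ) : K) = 0 := by exact_mod_cast h
      have hdvd := (CharP.cast_eq_zero_iff K p 2).mp h'
      have := Nat.le_of_dvd (by norm_num) hdvd
      have hp2 : p ≠ 2 := by
        intro he
        rw [he] at hodd
        exact (Nat.not_odd_iff_even.mpr (by norm_num)) hodd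
      have := hp.two_le
      omega
  have hcastinj : ∀ m n : ℕ, m ≤ d → n ≤ d → (m:K) = (n:K) → m = n := by
    intro m n hm hn h
    by_contra hne
    rcases Nat.lt_or_ge m n with hlt | hge
    · have : ((n - m : ℕ) : K) = 0 := by
        rw [Nat.cast_sub (le_of_lt hlt), h, sub_self]
      exact hn0 (n - m) (by omega) (by omega) this
    · have hlt : n < m := by omega
      have : ((m - n : ℕ) : K) = 0 := by
        rw [Nat.cast_sub (le_of_lt hlt), h, sub_self]
      exact hn0 (m - n) (by omega) (by omega) this
  have hθinj : Function.Injective θ := by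
    intro i j h
    simp only [hθ] at h
    have h' : (2:K) * ((i:ℕ):K) = (2:K) * ((j:ℕ):K) := by linear_combination -h
    have h'' : ((i:ℕ):K) = ((j:ℕ):K) := mul_left_cancel₀ h2 h'
    exact Fin.ext (hcastinj _ _ (by omega) (by omega) h'')
  have hc : ((2:K)^d) ≠ 0 := pow_ne_zero _ h2
  -- the Krawtchouk polynomials and matrix
  set f : ℕ → K[X] := fun n => (1 - X)^n * (1 + X)^(d - n) with hf
  set P : Matrix (Fin (d+1)) (Fin (d+1)) K :=
    Matrix.of (fun i j : Fin (d+1) => (f (i:ℕ)).coeff (j:ℕ)) with hP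
  -- Astar is diagonal with entries θ
  have hAsdiag : Astar = Matrix.diagonal (fun i : Fin (d+1) => θ i) := by
    ext i j
    rw [hAs, Matrix.diagonal_apply]
    by_cases h : i = j
    · subst h
      rw [if_pos rfl, if_pos rfl]
    · rw [if_neg h, if_neg (fun hc => h (Fin.ext hc))]
  -- the three-term recurrence
  have key1 : ∀ i : Fin (d+1), ∑ k : Fin (d+1), A i k • f (k:ℕ)
      = (d:K) • f (i:ℕ) - (2:K) • (X * derivative (f (i:ℕ))) := by
    intro i
    rw [sum_split A hA i (fun k => f (k:ℕ))]
    by_cases h0 : (i:ℕ) = 0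
    · by_cases hd : (i:ℕ) = d
      · -- d = 0
        have hd0 : d = 0 := by omega
        rw [dif_neg (by omega), dif_neg (by omega), hf]
        simp [h0, hd0]
      · -- i = 0 < d
        obtain ⟨b, hb⟩ : ∃ b, d = b + 1 := ⟨d - 1, by omega⟩
        rw [dif_pos (by omega), dif_neg (by omega), add_zero, hf]
        simp only [h0, Nat.cast_zero, sub_zero, Fin.val_mk]
        have e1 : d - (0 + 1) = b := by omega
        have e2 : d - 0 = b + 1 := by omega
        rw [e1, e2, show (0:ℕ) + 1 = 1 from rfl]
        have := rec_left (K := K) b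
        have hcast : ((b:K) + 1) = (d:K) := by rw [hb]; push_cast; ring
        rw [hcast] at this
        exact this
    · by_cases hd : (i:ℕ) = d
      · -- i = d > 0
        obtain ⟨b, hb⟩ : ∃ b, d = b + 1 := ⟨d - 1, by omega⟩
        rw [dif_neg (by omega), dif_pos (by omega), zero_add, hf]
        simp only [Fin.val_mk]
        have e1 : (i:ℕ) - 1 = b := by omega
        have e2 : d - ((i:ℕ) - 1) = 1 := by omega
        have e3 : (i:ℕ) = b + 1 := by omega
        have e4 : d - (i:ℕ) = 0 := by omega
        rw [e2, e1, e3, show d - (b+1) = 0 from by omega,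
          show (d:K) = ((b+1:ℕ):K) from by rw [hb]]
        have := rec_right (K := K) b
        have hcast : ((b:K) + 1) = (((b:ℕ) + 1 : ℕ):K) := by push_cast; ring
        rw [hcast] at this
        exact this
      · -- interior
        obtain ⟨a, ha⟩ : ∃ a, (i:ℕ) = a + 1 := ⟨(i:ℕ) - 1, by omega⟩
        obtain ⟨c, hcd⟩ : ∃ c, d = (i:ℕ) + c + 1 := ⟨d - (i:ℕ) - 1, by omega⟩
        rw [dif_pos (by omega), dif_pos (by omega), hf]
        simp only [Fin.val_mk]
        have e1 : d - ((i:ℕ) + 1) = c := by omega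
        have e2 : (i:ℕ) + 1 = (a + 2) - 0 := by omega
        have e3 : d - ((i:ℕ) - 1) = c + 2 := by omega
        have e4 : (i:ℕ) - 1 = a := by omega
        have e5 : d - (i:ℕ) = c + 1 := by omega
        rw [e1, e3, e4, e5, ha]
        have e6 : a + 1 + 1 = a + 2 := by omega
        rw [e6]
        have := rec_interior (K := K) a c
        have hc1 : ((c:K) + 1) = (d:K) - ((a:ℕ) + 1 : ℕ) := by
          rw [hcd, ha]; push_cast; ring
        have hc2 : ((a:K) + 1) = (((a:ℕ) + 1 : ℕ) : K) := by push_cast; ring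
        have hc3 : ((a:K) + (c:K) + 2) = (d:K) := by rw [hcd, ha]; push_cast; ring
        rw [hc1, hc2, hc3] at this
        exact_mod_cast this
  -- A * P = P * Astar
  have hAP : A * P = P * Astar := by
    ext i j
    rw [hAsdiag, Matrix.mul_diagonal, Matrix.mul_apply]
    calc ∑ k, A i k * P k j = (∑ k : Fin (d+1), A i k • f (k:ℕ)).coeff (j:ℕ) := by
          rw [Polynomial.finset_sum_coeff]
          exact Finset.sum_congr rfl fun k _ => by
            rw [Polynomial.coeff_smul, smul_eq_mul]; rfl
    _ = ((d:K) • f (i:ℕ) - (2:K) • (X * derivative (f (i:ℕ)))).coeff (j:ℕ) := by rw [key1 i]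
    _ = P i j * θ j := by
          rw [Polynomial.coeff_sub, Polynomial.coeff_smul, Polynomial.coeff_smul,
            coeff_X_mul_deriv]
          simp only [smul_eq_mul, hθ, hP, Matrix.of_apply]
          ring
  -- P * P = 2^d • 1
  have hPP : P * P = ((2:K)^d) • (1 : Matrix (Fin (d+1)) (Fin (d+1)) K) := by
    ext i j
    rw [Matrix.mul_apply]
    have hsum : ∑ k : Fin (d+1), (f (i:ℕ)).coeff (k:ℕ) • f (k:ℕ)
        = (2^d : K[X]) * X^(i:ℕ) := by
      have hiv : (i:ℕ) + (d - (i:ℕ)) = d := by omega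
      have hmain := LLaux_main (K := K) (i:ℕ) (d - (i:ℕ))
      rw [hiv] at hmain
      rw [← hmain]
      unfold LLaux
      rw [← Fin.sum_univ_eq_sum_range
        (fun k => (((1 - X)^(i:ℕ) * (1 + X)^(d - (i:ℕ)) : K[X])).coeff k
          • ((1 - X)^k * (1 + X)^(d - k))) (d+1)]
    calc ∑ k, P i k * P k j
        = (∑ k : Fin (d+1), (f (i:ℕ)).coeff (k:ℕ) • f (k:ℕ)).coeff (j:ℕ) := by
          rw [Polynomial.finset_sum_coeff]
          exact Finset.sum_congr rfl fun k _ => by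
            rw [Polynomial.coeff_smul, smul_eq_mul]; rfl
    _ = ((2^d : K[X]) * X^(i:ℕ)).coeff (j:ℕ) := by rw [hsum]
    _ = (((2:K)^d) • (1 : Matrix (Fin (d+1)) (Fin (d+1)) K)) i j := by
          rw [Matrix.smul_apply, Matrix.one_apply]
          rw [show (2^d : K[X]) = C ((2:K)^d) by rw [map_pow, map_ofNat],
            Polynomial.coeff_C_mul, Polynomial.coeff_X_pow]
          by_cases h : i = j
          · subst h; simp
          · rw [if_neg (fun hv => h (Fin.ext hv.symm)), if_neg h, mul_zero, smul_eq_mul, mul_zero]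
  -- inverse of P
  set Q : Matrix (Fin (d+1)) (Fin (d+1)) K := ((2:K)^d)⁻¹ • P with hQ
  have hPQ : P * Q = 1 := by
    rw [hQ, Matrix.mul_smul, hPP, smul_smul, inv_mul_cancel₀ hc, one_smul]
  have hQP : Q * P = 1 := by
    rw [hQ, Matrix.smul_mul, hPP, smul_smul, inv_mul_cancel₀ hc, one_smul]
  have hQAP : Q * A * P = Astar := by
    rw [mul_assoc, hAP, ← mul_assoc, hQP, one_mul]
  have hA_eq : A = P * Astar * Q := by
    rw [← hQAP]
    calc A = (P * Q) * A * (P * Q) := by rw [hPQ, one_mul, mul_one]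
    _ = P * (Q * A * P) * Q := by noncomm_ring
  have hQQ : Q * Q = ((2:K)^d)⁻¹ • (1 : Matrix (Fin (d+1)) (Fin (d+1)) K) := by
    rw [hQ, Matrix.smul_mul, Matrix.mul_smul, hPP, smul_smul, smul_smul]
    congr 1
    field_simp
  have hQAsP : Q * Astar * P = A := by
    rw [← hQAP]
    calc Q * (Q * A * P) * P = Q * Q * A * (P * P) := by noncomm_ring
    _ = A := by
        rw [hQQ, hPP]
        simp only [Matrix.smul_mul, Matrix.mul_smul, one_mul, mul_one, smul_smul]
        rw [mul_inv_cancel₀ hc, one_smul]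
  -- diagonal idempotents
  set ε : Fin (d+1) → Matrix (Fin (d+1)) (Fin (d+1)) K :=
    fun i => Matrix.diagonal (fun k => if k = i then (1:K) else 0) with hε
  have haevaldiag : ∀ p : K[X],
      aeval (Matrix.diagonal θ) p = Matrix.diagonal (fun k => aeval (θ k) p) := by
    intro p
    have h1 : Matrix.diagonal θ = Matrix.diagonalAlgHom (R := K) θ := rfl
    rw [h1, Polynomial.aeval_algHom_apply]
    show Matrix.diagonal _ = Matrix.diagonal _
    rw [Matrix.diagonal_eq_diagonal_iff]
    intro k
    exact (Polynomial.aeval_algHom_apply (Pi.evalAlgHom K (fun _ => K) k) θ p).symm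
  have hprimAs : ∀ i, primIdem Astar θ i = ε i := by
    intro i
    rw [primIdem, hAsdiag, haevaldiag, hε]
    show Matrix.diagonal _ = Matrix.diagonal _
    rw [Matrix.diagonal_eq_diagonal_iff]
    intro k
    rw [map_prod]
    by_cases h : k = i
    · subst h
      rw [if_pos rfl]
      refine Finset.prod_eq_one fun j hj => ?_
      have hjk : j ≠ k := (Finset.mem_erase.mp hj).1
      simp only [_root_.map_mul, map_sub, aeval_C, aeval_X, Algebra.algebraMap_self,
        RingHom.id_apply]
      exact inv_mul_cancel₀ (sub_ne_zero.mpr fun hh => hjk (hθinj hh).symm)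
    · rw [if_neg h]
      refine Finset.prod_eq_zero (Finset.mem_erase.mpr ⟨h, Finset.mem_univ k⟩) ?_
      simp only [_root_.map_mul, map_sub, aeval_C, aeval_X, Algebra.algebraMap_self,
        RingHom.id_apply, sub_self, mul_zero]
  have hE0 : ∀ (M : Matrix (Fin (d+1)) (Fin (d+1)) K) (i j : Fin (d+1)),
      ε i * M * ε j = 0 ↔ M i j = 0 := by
    intro M i j
    rw [hε]
    constructor
    · intro h
      have h' := congrFun (congrFun h i) j
      rw [Matrix.mul_diagonal, Matrix.diagonal_mul, Matrix.zero_apply] at h'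
      simpa using h'
    · intro h
      ext a b
      rw [Matrix.mul_diagonal, Matrix.diagonal_mul, Matrix.zero_apply]
      by_cases hai : a = i
      · by_cases hbj : b = j
        · subst hai; subst hbj; simp [h]
        · simp [hbj]
      · simp [hai]
  have hconj0 : ∀ N : Matrix (Fin (d+1)) (Fin (d+1)) K, (P * N * Q = 0) ↔ N = 0 := by
    intro N
    constructor
    · intro h
      have hN : N = Q * (P * N * Q) * P := by
        calc N = (Q * P) * N * (Q * P) := by rw [hQP, one_mul, mul_one]
        _ = Q * (P * N * Q) * P := by noncomm_ring
      rw [hN, h, mul_zero, zero_mul]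
    · intro h; rw [h, mul_zero, zero_mul]
  have hprimA : ∀ i, primIdem A θ i = P * ε i * Q := by
    intro i
    have h1 : primIdem A θ i = P * primIdem Astar θ i * Q := by
      unfold primIdem
      rw [hA_eq]
      exact aeval_conj P Q Astar hPQ hQP _
    rw [h1, hprimAs]
  have hMFAs : MultFreeWith Astar θ := by
    refine ⟨hθinj, ?_⟩
    rw [hAsdiag]
    have hcm : charmatrix (Matrix.diagonal θ) = Matrix.diagonal (fun i => (X:K[X]) - C (θ i)) := by
      ext a b
      by_cases h : a = b
      · subst h
        rw [charmatrix_apply_eq, Matrix.diagonal_apply_eq, Matrix.diagonal_apply_eq]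
      · rw [charmatrix_apply_ne _ _ _ h, Matrix.diagonal_apply_ne _ h,
          Matrix.diagonal_apply_ne _ h, map_zero, neg_zero]
    rw [Matrix.charpoly, hcm, Matrix.det_diagonal]
  have hMFA : MultFreeWith A θ := by
    refine ⟨hθinj, ?_⟩
    rw [hA_eq, charpoly_conj P Q Astar hPQ hQP]
    exact hMFAs.2
  have hA0 : ∀ i j : Fin (d+1), 1 < |((i:ℕ):ℤ) - ((j:ℕ):ℤ)| → A i j = 0 := by
    intro i j h
    rw [lt_abs] at h
    have hcond1 : ¬((j:ℕ) = (i:ℕ) + 1) := by rcases h with h | h <;> omega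
    have hcond2 : ¬((i:ℕ) = (j:ℕ) + 1) := by rcases h with h | h <;> omega
    rw [hA, if_neg hcond1, if_neg hcond2]
  have hA1 : ∀ i j : Fin (d+1), |((i:ℕ):ℤ) - ((j:ℕ):ℤ)| = 1 → A i j ≠ 0 := by
    intro i j h
    have h' : (j:ℕ) = (i:ℕ) + 1 ∨ (i:ℕ) = (j:ℕ) + 1 := by
      rw [abs_eq (by norm_num : (0:ℤ) ≤ 1)] at h
      rcases h with h | h
      · right; omega
      · left; omega
    rcases h' with h' | h'
    · rw [hA, if_pos h']
      have hid : (i:ℕ) < d := by have := j.isLt; omega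
      rw [show (d:K) - ((i:ℕ):K) = (((d - (i:ℕ)):ℕ):K) from by
        rw [Nat.cast_sub (by omega)]]
      exact hn0 _ (by omega) (by omega)
    · have hcond1 : ¬((j:ℕ) = (i:ℕ)+1) := by omega
      rw [hA, if_neg hcond1, if_pos h']
      exact hn0 _ (by omega) (by have := i.isLt; omega)
  have hkeyA : ∀ i j, primIdem A θ i * Astar * primIdem A θ j = P * (ε i * A * ε j) * Q := by
    intro i j
    rw [hprimA, hprimA]
    calc (P * ε i * Q) * Astar * (P * ε j * Q) = P * (ε i * (Q * Astar * P) * ε j) * Q := by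
          noncomm_ring
    _ = P * (ε i * A * ε j) * Q := by rw [hQAsP]
  have hseqA : IsEigenvalueSeq A Astar θ := by
    refine ⟨hMFA, fun i j => ⟨fun h => ?_, fun h => ?_⟩⟩
    · rw [hkeyA]
      exact (hconj0 _).mpr ((hE0 A i j).mpr (hA0 i j h))
    · intro h0
      rw [hkeyA] at h0
      exact hA1 i j h ((hE0 A i j).mp ((hconj0 _).mp h0))
  have hseqAs : IsEigenvalueSeq Astar A θ := by
    refine ⟨hMFAs, fun i j => ⟨fun h => ?_, fun h => ?_⟩⟩
    · rw [hprimAs, hprimAs]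
      exact (hE0 A i j).mpr (hA0 i j h)
    · rw [hprimAs, hprimAs]
      intro h0
      exact hA1 i j h ((hE0 A i j).mp h0)
  have hrow : ∀ i : Fin (d+1), ∑ j, A i j = (d:K) := by
    intro i
    have hs := sum_split A hA i (fun _ => (1:K))
    simp only [smul_eq_mul, mul_one] at hs
    rw [hs]
    by_cases hid : (i:ℕ) < d
    · by_cases hi0 : 0 < (i:ℕ)
      · rw [dif_pos hid, dif_pos hi0]; ring
      · rw [dif_pos hid, dif_neg hi0]
        have hi00 : (i:ℕ) = 0 := by omega
        rw [hi00]
        simp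
    · by_cases hi0 : 0 < (i:ℕ)
      · rw [dif_neg hid, dif_pos hi0, zero_add]
        have hdd : (i:ℕ) = d := by have := i.isLt; omega
        rw [hdd]
      · rw [dif_neg hid, dif_neg hi0, add_zero]
        have hd0 : d = 0 := by have := i.isLt; omega
        have hcast : (d:K) = ((0:ℕ):K) := by rw [hd0]
        rw [hcast, Nat.cast_zero]
  have hdiag : Astar.IsDiag := by
    intro a b hab
    rw [hAs, if_neg (fun hc' => hab (Fin.ext hc'))]
  refine ⟨⟨⟨θ, hseqA⟩, ⟨θ, hseqAs⟩⟩, hrow, hA0, hdiag, θ, hseqA, Or.inl ?_⟩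
  simp [hθ]
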